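/- Consider the eight pairwise distinct {0,1}-vectors in Fin 8 → Fin 7 → ℕ whose supports are: v1 = {1,2}, v2 = {1,3}, v3 = {2,4}, v4 = {3,4}, v5 = {4,5}, v6 = {4,6}, v7 = {5,7}, v8 = {6,7}; each vector has exactly two entries equal to 1, the supports are pairwise distinct, and the simple graph on Fin 7 with these eight edges is connected. Then: (a) the pair partition M0 with blocks {1,2}, {3,5}, {4,6}, {7,8} has minimum cost (namely 12) among all pair partitions of Fin 8; (b) every second-phase partition of the blocks of M0 has induced cost at least 10; and (c) the minimum cost over all quad partitions is OPT = 8 (attained by the quads {1,2,3,4} and {5,6,7,8}). Hence the two-phase matching algorithm can output a solution of cost 10 = (5/4)·OPT on this instance of PQ(#1=2, distinct, connected). -/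

import Mathlib

open Finset

/-- Cost of a block `B`: sum of componentwise maxima of the vectors indexed by `B`. -/
def blockCost {N n : ℕ} (v : Fin N → Fin n → ℕ) (B : Finset (Fin N)) : ℕ :=
  ∑ j : Fin n, B.sup fun i => v i j

/-- Cost of a partition of `Fin N`: sum of the costs of its blocks. -/
def partCost {N n : ℕ} (v : Fin N → Fin n → ℕ)
    (P : Finpartition (univ : Finset (Fin N))) : ℕ :=
  ∑ b ∈ P.parts, blockCost v b

/-- A pair partition: every block has size 2. -/
def IsPairPartition {N : ℕ} (P : Finpartition (univ : Finset (Fin N))) : Prop :=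
  ∀ b ∈ P.parts, b.card = 2

/-- A quad partition: every block has size 4. -/
def IsQuadPartition {N : ℕ} (P : Finpartition (univ : Finset (Fin N))) : Prop :=
  ∀ b ∈ P.parts, b.card = 4

/-- A second-phase partition: a partition of the blocks of `M` into pairs of blocks. -/
def IsSecondPhase {N : ℕ} (M : Finpartition (univ : Finset (Fin N)))
    (S : Finpartition M.parts) : Prop :=
  ∀ q ∈ S.parts, q.card = 2

/-- Induced cost of a second-phase partition: cost of the quad partition whose blocks
are the unions of the paired blocks. -/
def inducedCost {N n : ℕ} (v : Fin N → Fin n → ℕ)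
    (M : Finpartition (univ : Finset (Fin N))) (S : Finpartition M.parts) : ℕ :=
  ∑ q ∈ S.parts, blockCost v (q.sup id)

/-- The simple graph on the components `Fin n` whose edges are the supports of the
vectors `v i`. -/
def vecGraph {N n : ℕ} (v : Fin N → Fin n → ℕ) : SimpleGraph (Fin n) where
  Adj a b := a ≠ b ∧ ∃ i, v i a = 1 ∧ v i b = 1
  symm := by
    constructor
    rintro a b ⟨hab, i, ha, hb⟩
    exact ⟨hab.symm, i, hb, ha⟩
  loopless := by
    constructor
    rintro a ⟨h, -⟩
    exact h rfl

/-- The eight vectors of the bad instance of PQ(#1=2, distinct, connected);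
supports (1-indexed): {1,2}, {1,3}, {2,4}, {3,4}, {4,5}, {4,6}, {5,7}, {6,7}. -/
def badVec6 : Fin 8 → Fin 7 → ℕ :=
  ![![1, 1, 0, 0, 0, 0, 0], ![1, 0, 1, 0, 0, 0, 0], ![0, 1, 0, 1, 0, 0, 0],
    ![0, 0, 1, 1, 0, 0, 0], ![0, 0, 0, 1, 1, 0, 0], ![0, 0, 0, 1, 0, 1, 0],
    ![0, 0, 0, 0, 1, 0, 1], ![0, 0, 0, 0, 0, 1, 1]]

lemma pairCost_ge : ∀ i k : Fin 8, i ≠ k → 3 ≤ blockCost badVec6 {i, k} := by decide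

lemma quadCost_ge : ∀ i j k l : Fin 8, ({i, j, k, l} : Finset (Fin 8)).card = 4 →
    4 ≤ blockCost badVec6 {i, j, k, l} := by decide

set_option maxRecDepth 4000 in
lemma secondPairs_ge : ∀ b ∈ ({({0, 1} : Finset (Fin 8)), {2, 4}, {3, 5}, {6, 7}} :
      Finset (Finset (Fin 8))), ∀ b' ∈ ({({0, 1} : Finset (Fin 8)), {2, 4}, {3, 5}, {6, 7}} :
      Finset (Finset (Fin 8))), b ≠ b' → 5 ≤ blockCost badVec6 (b ⊔ b') := by decide

lemma badVec6_connected : (vecGraph badVec6).Connected := by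
  rw [SimpleGraph.connected_iff]
  refine ⟨?_, ⟨0⟩⟩
  have adj : ∀ a b : Fin 7, (a ≠ b ∧ ∃ i, badVec6 i a = 1 ∧ badVec6 i b = 1) →
      (vecGraph badVec6).Adj a b := fun a b h => h
  have h3 : ∀ u : Fin 7, (vecGraph badVec6).Reachable u 3 := by
    intro u
    fin_cases u
    · exact (SimpleGraph.Adj.reachable (adj 0 1 (by decide))).trans
        (SimpleGraph.Adj.reachable (adj 1 3 (by decide)))
    · exact SimpleGraph.Adj.reachable (adj 1 3 (by decide))
    · exact SimpleGraph.Adj.reachable (adj 2 3 (by decide))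
    · exact SimpleGraph.Reachable.refl _
    · exact SimpleGraph.Adj.reachable (adj 4 3 (by decide))
    · exact SimpleGraph.Adj.reachable (adj 5 3 (by decide))
    · exact (SimpleGraph.Adj.reachable (adj 6 4 (by decide))).trans
        (SimpleGraph.Adj.reachable (adj 4 3 (by decide)))
  intro u v
  exact (h3 u).trans (h3 v).symm

/-- The optimal quad partition. -/
def quadQ : Finpartition (univ : Finset (Fin 8)) where
  parts := {({0, 1, 2, 3} : Finset (Fin 8)), {4, 5, 6, 7}}
  supIndep := by decide
  sup_parts := by decide
  bot_notMem := by decide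

theorem pq2dc_lb_instance (M0 : Finpartition (univ : Finset (Fin 8)))
    (hM0 : M0.parts = {({0, 1} : Finset (Fin 8)), {2, 4}, {3, 5}, {6, 7}}) :
    Function.Injective badVec6 ∧ (vecGraph badVec6).Connected ∧
    IsPairPartition M0 ∧ partCost badVec6 M0 = 12 ∧
    (∀ M' : Finpartition (univ : Finset (Fin 8)),
      IsPairPartition M' → partCost badVec6 M0 ≤ partCost badVec6 M') ∧
    (∀ S : Finpartition M0.parts, IsSecondPhase M0 S → 10 ≤ inducedCost badVec6 M0 S) ∧
    (∃ Q : Finpartition (univ : Finset (Fin 8)), IsQuadPartition Q ∧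
      Q.parts = {({0, 1, 2, 3} : Finset (Fin 8)), {4, 5, 6, 7}} ∧
      partCost badVec6 Q = 8) ∧
    (∀ Q : Finpartition (univ : Finset (Fin 8)),
      IsQuadPartition Q → 8 ≤ partCost badVec6 Q) := by
  have hcost : partCost badVec6 M0 = 12 := by
    show ∑ b ∈ M0.parts, blockCost badVec6 b = 12
    rw [hM0]; decide
  refine ⟨by decide, badVec6_connected, ?_, hcost, ?_, ?_, ?_, ?_⟩
  · intro b hb; rw [hM0] at hb; fin_cases hb <;> decide
  · -- pair optimality
    intro M' hM'
    have hsum := M'.sum_card_parts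
    rw [Finset.sum_congr rfl hM'] at hsum
    simp only [Finset.sum_const, smul_eq_mul, Finset.card_univ, Fintype.card_fin] at hsum
    have hcard : M'.parts.card = 4 := by omega
    have hle : M'.parts.card • 3 ≤ ∑ b ∈ M'.parts, blockCost badVec6 b := by
      apply Finset.card_nsmul_le_sum
      intro b hb
      obtain ⟨i, k, hik, rfl⟩ := Finset.card_eq_two.mp (hM' b hb)
      exact pairCost_ge i k hik
    rw [hcard] at hle
    calc partCost badVec6 M0 = 12 := hcost
      _ ≤ partCost badVec6 M' := hle
  · -- second phase
    intro S hS
    have hsum := S.sum_card_parts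
    rw [Finset.sum_congr rfl hS] at hsum
    simp only [Finset.sum_const, smul_eq_mul] at hsum
    have h4 : M0.parts.card = 4 := by rw [hM0]; decide
    have hcard : S.parts.card = 2 := by omega
    have hle : S.parts.card • 5 ≤ ∑ q ∈ S.parts, blockCost badVec6 (q.sup id) := by
      apply Finset.card_nsmul_le_sum
      intro q hq
      obtain ⟨b, b', hne, rfl⟩ := Finset.card_eq_two.mp (hS q hq)
      have hsub : ({b, b'} : Finset (Finset (Fin 8))) ⊆ M0.parts := S.le hq
      have hb : b ∈ M0.parts := hsub (by simp)
      have hb' : b' ∈ M0.parts := hsub (by simp)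
      rw [hM0] at hb hb'
      have hsup : ({b, b'} : Finset (Finset (Fin 8))).sup id = b ⊔ b' := by
        simp
      rw [hsup]
      exact secondPairs_ge b hb b' hb' hne
    rw [hcard] at hle
    exact hle
  · -- optimal quad partition
    refine ⟨quadQ, ?_, rfl, ?_⟩
    · intro b hb
      have : b ∈ ({({0, 1, 2, 3} : Finset (Fin 8)), {4, 5, 6, 7}} :
          Finset (Finset (Fin 8))) := hb
      fin_cases this <;> decide
    · show ∑ b ∈ quadQ.parts, blockCost badVec6 b = 8
      decide
  · -- quad lower bound
    intro Q hQ
    have hsum := Q.sum_card_parts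
    rw [Finset.sum_congr rfl hQ] at hsum
    simp only [Finset.sum_const, smul_eq_mul, Finset.card_univ, Fintype.card_fin] at hsum
    have hcard : Q.parts.card = 2 := by omega
    have hle : Q.parts.card • 4 ≤ ∑ b ∈ Q.parts, blockCost badVec6 b := by
      apply Finset.card_nsmul_le_sum
      intro b hb
      have hb4 := hQ b hb
      obtain ⟨a, t, hat, rfl, ht3⟩ := Finset.card_eq_succ.mp hb4
      obtain ⟨x, y, z, hxy, hxz, hyz, rfl⟩ := Finset.card_eq_three.mp ht3
      exact quadCost_ge a x y z hb4
    rw [hcard] at hle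
    exact hle
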